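/- arXiv:0706.1147 — 4 statements merged into one kernel-verified Lean document; each statement's English description precedes it below -/
import Mathlib

section
/- Let L be a positive integer and b : {1,…,L} → ℕ with b(i) ≤ i for all i. Let h : ℂ × (0,1)^L → ℂ be such that h(·,x) is analytic on the strip {0 < Re D < 2} for almost every x, h(D,·) is measurable for every D, and |h| is bounded on K × (0,1)^L for every compact K contained in the strip. Then the function F(D) = ∫_{(0,1)^L} ∏_{i=1}^L (1 − (∏_{j=i}^L x_j²)²)^{D/2 − 1} · x_i^{2i − 1 − D·b(i)} · h(D,x) dx is well defined (the integral converges absolutely) and analytic on the strip {D ∈ ℂ : 0 < Re D < 2}. -/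
open MeasureTheory Complex Finset

lemma aux_rpow_integrable {p e : ℝ} (hp : -1 < p) (hp0 : p ≤ 0) (he : -1 < e) :
    IntegrableOn (fun s : ℝ => (1 - s ^ 2) ^ p * s ^ e) (Set.Ioo (0:ℝ) 1) volume := by
  have hu : (0:ℝ) < e + 1 := by linarith
  have hv : (0:ℝ) < p + 1 := by linarith
  have hbeta := Complex.betaIntegral_convergent (u := (e+1 : ℂ)) (v := (p+1 : ℂ))
    (by simpa using hu) (by simpa using hv)
  have hInt : IntegrableOn
      (fun s : ℝ => ‖(s : ℂ) ^ ((e:ℂ)+1-1) * (1 - (s:ℂ)) ^ ((p:ℂ)+1-1)‖)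
      (Set.Ioo (0:ℝ) 1) volume := by
    have := ((intervalIntegrable_iff_integrableOn_Ioo_of_le (by norm_num : (0:ℝ) ≤ 1)).mp hbeta).norm
    exact this
  refine hInt.mono' ?_ ?_
  · apply ContinuousOn.aestronglyMeasurable ?_ measurableSet_Ioo
    intro s hs
    obtain ⟨hs0, hs1⟩ := hs
    have h1 : (0:ℝ) < 1 - s ^ 2 := by nlinarith
    have c1 : ContinuousAt (fun s : ℝ => (1 - s ^ 2) ^ p) s :=
      ContinuousAt.rpow_const (by fun_prop) (Or.inl h1.ne')
    have c2 : ContinuousAt (fun s : ℝ => s ^ e) s :=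
      Real.continuousAt_rpow_const s e (Or.inl hs0.ne')
    exact (c1.mul c2).continuousWithinAt
  · refine (ae_restrict_iff' measurableSet_Ioo).mpr (ae_of_all _ fun s hs => ?_)
    obtain ⟨hs0, hs1⟩ := hs
    have h1 : (0:ℝ) < 1 - s := by linarith
    have h2 : (0:ℝ) < 1 - s ^ 2 := by nlinarith
    have hnorm : ‖(s : ℂ) ^ ((e:ℂ)+1-1) * (1 - (s:ℂ)) ^ ((p:ℂ)+1-1)‖
        = s ^ e * (1 - s) ^ p := by
      rw [norm_mul]
      have e1 : ((e:ℂ)+1-1) = ((e:ℝ):ℂ) := by ring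
      have e2 : ((p:ℂ)+1-1) = ((p:ℝ):ℂ) := by ring
      have b1 : (1 - (s:ℂ)) = ((1 - s : ℝ) : ℂ) := by push_cast; ring
      rw [e1, e2, b1]
      rw [Complex.norm_cpow_eq_rpow_re_of_pos hs0, Complex.norm_cpow_eq_rpow_re_of_pos h1]
      simp
    rw [hnorm, Real.norm_eq_abs, _root_.abs_of_nonneg (by positivity)]
    have hle : (1 - s ^ 2) ^ p ≤ (1 - s) ^ p :=
      Real.rpow_le_rpow_of_nonpos h1 (by nlinarith) hp0
    calc (1 - s ^ 2) ^ p * s ^ e ≤ (1 - s) ^ p * s ^ e :=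
          mul_le_mul_of_nonneg_right hle (by positivity)
      _ = s ^ e * (1 - s) ^ p := by ring

lemma aux_diff_finset_prod {ι : Type*} (s : Finset ι) (f : ι → ℂ → ℂ)
    (hf : ∀ i ∈ s, Differentiable ℂ (f i)) :
    Differentiable ℂ (fun D => ∏ i ∈ s, f i D) := by
  classical
  induction s using Finset.induction_on with
  | empty => simpa using (differentiable_const (1:ℂ))
  | @insert a s hni ih =>
      simp only [Finset.prod_insert hni]
      exact (hf a (Finset.mem_insert_self a s)).mul
        (ih fun i hi => hf i (Finset.mem_insert_of_mem hi))

set_option maxHeartbeats 4000000 in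
/-- In a fixed Hepp sector, after the change of variables
`t_ℓ = ∏_{j=ℓ}^L x_j²`, the Feynman-amplitude-type integral
`F(D) = ∫_{(0,1)^L} ∏ᵢ (1 − (∏_{j≥i} x_j²)²)^{D/2−1} · xᵢ^{2i−1−D·b(i)} · h(D,x) dx`,
with `b(i) ≤ i` (indices taken 1-based) and `h` a.e. analytic and locally uniformly
bounded in `D`, converges absolutely and is analytic on the strip `0 < Re D < 2`. -/
theorem statement1
    (L : ℕ) (hL : 0 < L) (b : Fin L → ℕ)
    (hb : ∀ i : Fin L, b i ≤ (i : ℕ) + 1)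
    (h : ℂ → (Fin L → ℝ) → ℂ)
    (h_an : ∀ᵐ x : Fin L → ℝ,
      x ∈ Set.univ.pi (fun _ : Fin L => Set.Ioo (0:ℝ) 1) →
        AnalyticOn ℂ (fun D => h D x) {D : ℂ | 0 < D.re ∧ D.re < 2})
    (h_meas : ∀ D : ℂ, Measurable (h D))
    (h_bd : ∀ K : Set ℂ, IsCompact K → K ⊆ {D : ℂ | 0 < D.re ∧ D.re < 2} →
      ∃ M : ℝ, ∀ D ∈ K, ∀ x ∈ Set.univ.pi (fun _ : Fin L => Set.Ioo (0:ℝ) 1),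
        ‖h D x‖ ≤ M) :
    (∀ D : ℂ, 0 < D.re ∧ D.re < 2 →
      IntegrableOn
        (fun x : Fin L → ℝ =>
          (∏ i : Fin L,
            ((1 - (∏ j ∈ Finset.Ici i, (x j) ^ 2) ^ 2 : ℝ) : ℂ) ^ (D / 2 - 1) *
              (x i : ℂ) ^ ((2 * ((i : ℕ) + 1) : ℂ) - 1 - D * (b i : ℂ))) * h D x)
        (Set.univ.pi (fun _ : Fin L => Set.Ioo (0:ℝ) 1)) volume) ∧
    AnalyticOn ℂ
      (fun D : ℂ =>
        ∫ x in Set.univ.pi (fun _ : Fin L => Set.Ioo (0:ℝ) 1),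
          (∏ i : Fin L,
            ((1 - (∏ j ∈ Finset.Ici i, (x j) ^ 2) ^ 2 : ℝ) : ℂ) ^ (D / 2 - 1) *
              (x i : ℂ) ^ ((2 * ((i : ℕ) + 1) : ℂ) - 1 - D * (b i : ℂ))) * h D x)
      {D : ℂ | 0 < D.re ∧ D.re < 2} := by
  classical
  set S : Set ℂ := {D : ℂ | 0 < D.re ∧ D.re < 2} with hS_def
  set B : Set (Fin L → ℝ) := Set.univ.pi (fun _ : Fin L => Set.Ioo (0:ℝ) 1) with hB_def
  set P : ℂ → (Fin L → ℝ) → ℂ := fun D x =>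
    ∏ i : Fin L,
      ((1 - (∏ j ∈ Finset.Ici i, (x j) ^ 2) ^ 2 : ℝ) : ℂ) ^ (D / 2 - 1) *
        (x i : ℂ) ^ ((2 * ((i : ℕ) + 1) : ℂ) - 1 - D * (b i : ℂ)) with hP_def
  set G : ℝ → ℝ → (Fin L → ℝ) → ℝ := fun σ₀ σ₁ x =>
    ∏ i : Fin L,
      (1 - (x i) ^ 2) ^ (σ₀ / 2 - 1) *
        (x i) ^ ((2 * ((i : ℕ) + 1) : ℝ) - 1 - σ₁ * (b i : ℝ)) with hG_def
  have hS_open : IsOpen S := by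
    have : S = Complex.re ⁻¹' Set.Ioo 0 2 := by
      ext z; simp [hS_def, Set.mem_Ioo]
    rw [this]
    exact isOpen_Ioo.preimage Complex.continuous_re
  have hBmeas : MeasurableSet B :=
    MeasurableSet.univ_pi fun _ => measurableSet_Ioo
  -- basic facts about points of B
  have hxB : ∀ x ∈ B, ∀ i : Fin L, 0 < x i ∧ x i < 1 := by
    intro x hx i
    have := hx i (Set.mem_univ i)
    exact ⟨this.1, this.2⟩
  have ht : ∀ x ∈ B, ∀ i : Fin L,
      0 < ∏ j ∈ Finset.Ici i, (x j) ^ 2 ∧ ∏ j ∈ Finset.Ici i, (x j) ^ 2 ≤ (x i) ^ 2 := by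
    intro x hx i
    constructor
    · exact Finset.prod_pos fun j _ => pow_pos (hxB x hx j).1 2
    · rw [← Finset.prod_erase_mul _ _ (Finset.mem_Ici.mpr le_rfl)]
      have h1 : ∏ j ∈ (Finset.Ici i).erase i, (x j) ^ 2 ≤ 1 :=
        Finset.prod_le_one (fun j _ => by positivity)
          (fun j _ => by nlinarith [(hxB x hx j).1, (hxB x hx j).2])
      nlinarith [pow_pos (hxB x hx i).1 2]
  have hone : ∀ x ∈ B, ∀ i : Fin L,
      0 < 1 - (∏ j ∈ Finset.Ici i, (x j) ^ 2) ^ 2 ∧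
      1 - (x i) ^ 2 ≤ 1 - (∏ j ∈ Finset.Ici i, (x j) ^ 2) ^ 2 ∧
      1 - (∏ j ∈ Finset.Ici i, (x j) ^ 2) ^ 2 ≤ 1 := by
    intro x hx i
    obtain ⟨htp, htle⟩ := ht x hx i
    obtain ⟨hx0, hx1⟩ := hxB x hx i
    have hxi2 : x i ^ 2 < 1 := by nlinarith
    have ht1 : ∏ j ∈ Finset.Ici i, (x j) ^ 2 < 1 := lt_of_le_of_lt htle hxi2
    have htsq : (∏ j ∈ Finset.Ici i, (x j) ^ 2) ^ 2 < 1 :=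
      pow_lt_one₀ htp.le ht1 two_ne_zero
    have htsq_le : (∏ j ∈ Finset.Ici i, (x j) ^ 2) ^ 2 ≤ x i ^ 2 := by
      have h1 : (∏ j ∈ Finset.Ici i, (x j) ^ 2) ^ 2 ≤ ∏ j ∈ Finset.Ici i, (x j) ^ 2 := by
        nlinarith [mul_nonneg htp.le (by linarith : (0:ℝ) ≤ 1 - ∏ j ∈ Finset.Ici i, (x j) ^ 2)]
      linarith
    have htsqnn : 0 ≤ (∏ j ∈ Finset.Ici i, (x j) ^ 2) ^ 2 := sq_nonneg _
    exact ⟨by linarith, by linarith, by linarith⟩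
  -- the key norm bound
  have key : ∀ σ₀ σ₁ : ℝ, 0 < σ₀ → σ₁ < 2 → ∀ D : ℂ, σ₀ ≤ D.re → D.re ≤ σ₁ →
      ∀ x ∈ B, ‖P D x‖ ≤ G σ₀ σ₁ x := by
    intro σ₀ σ₁ hσ₀ hσ₁ D hre1 hre2 x hx
    rw [hP_def, hG_def]
    rw [norm_prod]
    apply Finset.prod_le_prod (fun i _ => norm_nonneg _)
    intro i _
    obtain ⟨hx0, hx1⟩ := hxB x hx i
    obtain ⟨ha0, ha1, ha2⟩ := hone x hx i
    rw [norm_mul]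
    have n1 : ‖((1 - (∏ j ∈ Finset.Ici i, (x j) ^ 2) ^ 2 : ℝ) : ℂ) ^ (D / 2 - 1)‖
        = (1 - (∏ j ∈ Finset.Ici i, (x j) ^ 2) ^ 2) ^ (D.re / 2 - 1) := by
      rw [Complex.norm_cpow_eq_rpow_re_of_pos ha0]
      norm_num
    have n2 : ‖(x i : ℂ) ^ ((2 * ((i : ℕ) + 1) : ℂ) - 1 - D * (b i : ℂ))‖
        = (x i) ^ ((2 * ((i : ℕ) + 1) : ℝ) - 1 - D.re * (b i : ℝ)) := by
      rw [Complex.norm_cpow_eq_rpow_re_of_pos hx0]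
      norm_num
    rw [n1, n2]
    have b1 : (1 - (∏ j ∈ Finset.Ici i, (x j) ^ 2) ^ 2) ^ (D.re / 2 - 1)
        ≤ (1 - (x i) ^ 2) ^ (σ₀ / 2 - 1) := by
      calc (1 - (∏ j ∈ Finset.Ici i, (x j) ^ 2) ^ 2) ^ (D.re / 2 - 1)
          ≤ (1 - (∏ j ∈ Finset.Ici i, (x j) ^ 2) ^ 2) ^ (σ₀ / 2 - 1) :=
            Real.rpow_le_rpow_of_exponent_ge ha0 ha2 (by linarith)
        _ ≤ (1 - (x i) ^ 2) ^ (σ₀ / 2 - 1) :=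
            Real.rpow_le_rpow_of_nonpos (by nlinarith) ha1 (by linarith)
    have b2 : (x i) ^ ((2 * ((i : ℕ) + 1) : ℝ) - 1 - D.re * (b i : ℝ))
        ≤ (x i) ^ ((2 * ((i : ℕ) + 1) : ℝ) - 1 - σ₁ * (b i : ℝ)) := by
      apply Real.rpow_le_rpow_of_exponent_ge hx0 hx1.le
      have : D.re * (b i : ℝ) ≤ σ₁ * (b i : ℝ) :=
        mul_le_mul_of_nonneg_right hre2 (by positivity)
      linarith
    exact mul_le_mul b1 b2 (Real.rpow_nonneg hx0.le _) (Real.rpow_nonneg (by nlinarith) _)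
  -- nonnegativity of G
  have hGnn : ∀ σ₀ σ₁ : ℝ, ∀ x ∈ B, 0 ≤ G σ₀ σ₁ x := by
    intro σ₀ σ₁ x hx
    rw [hG_def]
    apply Finset.prod_nonneg
    intro i _
    obtain ⟨hx0, hx1⟩ := hxB x hx i
    have : (0:ℝ) ≤ 1 - (x i)^2 := by nlinarith
    positivity
  -- integrability of the dominating function
  have dom : ∀ σ₀ σ₁ : ℝ, 0 < σ₀ → σ₀ ≤ σ₁ → σ₁ < 2 →
      IntegrableOn (G σ₀ σ₁) B volume := by
    intro σ₀ σ₁ h0 h01 h1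
    rw [← integrable_indicator_iff hBmeas]
    have heq : B.indicator (G σ₀ σ₁) = fun x : Fin L → ℝ =>
        ∏ i : Fin L, (Set.Ioo (0:ℝ) 1).indicator
          (fun s => (1 - s ^ 2) ^ (σ₀ / 2 - 1) *
            s ^ ((2 * ((i : ℕ) + 1) : ℝ) - 1 - σ₁ * (b i : ℝ))) (x i) := by
      funext x
      by_cases hx : x ∈ B
      · rw [Set.indicator_of_mem hx, hG_def]
        refine Finset.prod_congr rfl fun i _ => ?_
        rw [Set.indicator_of_mem (show x i ∈ Set.Ioo (0:ℝ) 1 from hx i (Set.mem_univ i))]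
      · rw [Set.indicator_of_notMem hx]
        have : ∃ i : Fin L, x i ∉ Set.Ioo (0:ℝ) 1 := by
          by_contra hcon
          push_neg at hcon
          exact hx fun i _ => hcon i
        obtain ⟨i, hi⟩ := this
        exact (Finset.prod_eq_zero (Finset.mem_univ i)
          (Set.indicator_of_notMem hi _)).symm
    rw [heq]
    apply Integrable.fintype_prod (f := fun (i : Fin L) (s : ℝ) =>
      (Set.Ioo (0:ℝ) 1).indicator
        (fun s => (1 - s ^ 2) ^ (σ₀ / 2 - 1) *
          s ^ ((2 * ((i : ℕ) + 1) : ℝ) - 1 - σ₁ * (b i : ℝ))) s)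
    intro i
    rw [integrable_indicator_iff measurableSet_Ioo]
    apply aux_rpow_integrable (by linarith) (by linarith)
    have hbi : (b i : ℝ) ≤ (i : ℕ) + 1 := by exact_mod_cast hb i
    have h1i : (1:ℝ) ≤ (i : ℕ) + 1 := by
      have := Nat.cast_nonneg (α := ℝ) (i : ℕ)
      linarith
    nlinarith
  -- continuity of P D in x on B, hence a.e. strong measurability
  have hP_cont : ∀ D : ℂ, ContinuousOn (P D) B := by
    intro D
    rw [hP_def]
    apply continuousOn_finset_prod
    intro i _
    apply ContinuousOn.mul
    · intro x hx
      have hbase : ContinuousAt (fun x : Fin L → ℝ =>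
          ((1 - (∏ j ∈ Finset.Ici i, (x j) ^ 2) ^ 2 : ℝ) : ℂ)) x := by
        apply Continuous.continuousAt
        apply Complex.continuous_ofReal.comp
        exact continuous_const.sub
          ((continuous_finset_prod _ fun j _ => (continuous_apply j).pow 2).pow 2)
      refine (hbase.cpow continuousAt_const ?_).continuousWithinAt
      rw [Complex.mem_slitPlane_iff]
      left
      simp only [Complex.ofReal_re]
      exact (hone x hx i).1
    · intro x hx
      have hbase : ContinuousAt (fun x : Fin L → ℝ => ((x i : ℝ) : ℂ)) x :=
        Complex.continuous_ofReal.continuousAt.comp (continuous_apply i).continuousAt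
      refine (hbase.cpow continuousAt_const ?_).continuousWithinAt
      rw [Complex.mem_slitPlane_iff]
      left
      simp only [Complex.ofReal_re]
      exact (hxB x hx i).1
  have hAESM : ∀ D : ℂ, AEStronglyMeasurable (fun x => P D x * h D x) (volume.restrict B) :=
    fun D => ((hP_cont D).aestronglyMeasurable hBmeas).mul
      ((h_meas D).aestronglyMeasurable.restrict)
  -- Part 1: integrability
  have part1 : ∀ D : ℂ, 0 < D.re ∧ D.re < 2 →
      IntegrableOn (fun x => P D x * h D x) B volume := by
    rintro D ⟨h1, h2⟩
    obtain ⟨M, hM⟩ := h_bd {D} isCompact_singleton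
      (by rw [Set.singleton_subset_iff]; exact ⟨h1, h2⟩)
    set M' := max M 0 with hM'_def
    refine Integrable.mono' ((dom D.re D.re h1 le_rfl h2).const_mul M') (hAESM D) ?_
    refine (ae_restrict_iff' hBmeas).mpr (ae_of_all _ fun x hx => ?_)
    rw [norm_mul]
    calc ‖P D x‖ * ‖h D x‖ ≤ G D.re D.re x * M' :=
          mul_le_mul (key D.re D.re h1 h2 D le_rfl le_rfl x hx)
            ((hM D rfl x hx).trans (le_max_left M 0))
            (norm_nonneg _) (hGnn _ _ x hx)
      _ = M' * G D.re D.re x := mul_comm _ _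
  -- differentiability in D
  have hPdiff : ∀ x ∈ B, Differentiable ℂ (fun D => P D x) := by
    intro x hx
    rw [hP_def]
    apply aux_diff_finset_prod
    intro i _
    have hc : ((1 - (∏ j ∈ Finset.Ici i, (x j) ^ 2) ^ 2 : ℝ) : ℂ) ≠ 0 := by
      simp only [ne_eq, Complex.ofReal_eq_zero]
      exact (hone x hx i).1.ne'
    have hd : ((x i : ℝ) : ℂ) ≠ 0 := by
      simp only [ne_eq, Complex.ofReal_eq_zero]
      exact (hxB x hx i).1.ne'
    have heq : (fun D : ℂ =>
        ((1 - (∏ j ∈ Finset.Ici i, (x j) ^ 2) ^ 2 : ℝ) : ℂ) ^ (D / 2 - 1) *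
          (x i : ℂ) ^ ((2 * ((i : ℕ) + 1) : ℂ) - 1 - D * (b i : ℂ)))
        = fun D : ℂ =>
        Complex.exp (Complex.log ((1 - (∏ j ∈ Finset.Ici i, (x j) ^ 2) ^ 2 : ℝ) : ℂ)
            * (D / 2 - 1)) *
          Complex.exp (Complex.log ((x i : ℝ) : ℂ)
            * ((2 * ((i : ℕ) + 1) : ℂ) - 1 - D * (b i : ℂ))) := by
      funext D
      rw [Complex.cpow_def_of_ne_zero hc, Complex.cpow_def_of_ne_zero hd]
    rw [heq]
    apply Differentiable.mul
    · apply Differentiable.cexp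
      fun_prop
    · apply Differentiable.cexp
      fun_prop
  have hΦdiffOn : ∀ᵐ x : Fin L → ℝ, x ∈ B →
      DifferentiableOn ℂ (fun D => P D x * h D x) S := by
    filter_upwards [h_an] with x hx hxB'
    exact ((hPdiff x hxB').differentiableOn).mul ((hx hxB').differentiableOn)
  -- main differentiability statement
  have main_diff : ∀ D₀ ∈ S, DifferentiableAt ℂ
      (fun D : ℂ => ∫ x in B, P D x * h D x) D₀ := by
    intro D₀ hD₀
    obtain ⟨hσ1, hσ2⟩ := hD₀
    set σ : ℝ := D₀.re with hσ_def
    set r : ℝ := min σ (2 - σ) / 4 with hr_def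
    have hr : 0 < r := by
      rw [hr_def]
      have : 0 < min σ (2 - σ) := lt_min hσ1 (by linarith)
      linarith
    have hr1 : 2 * r ≤ σ / 2 := by
      have : min σ (2 - σ) ≤ σ := min_le_left _ _
      rw [hr_def]; linarith
    have hr2 : 2 * r ≤ (2 - σ) / 2 := by
      have : min σ (2 - σ) ≤ 2 - σ := min_le_right _ _
      rw [hr_def]; linarith
    set σ₀ : ℝ := σ - 2 * r with hσ₀_def
    set σ₁ : ℝ := σ + 2 * r with hσ₁_def
    have hσ₀pos : 0 < σ₀ := by rw [hσ₀_def]; linarith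
    have hσ₁lt : σ₁ < 2 := by rw [hσ₁_def]; linarith
    have hσ₀₁ : σ₀ ≤ σ₁ := by rw [hσ₀_def, hσ₁_def]; linarith
    have hre_ball : ∀ z ∈ Metric.closedBall D₀ (2 * r), σ₀ ≤ z.re ∧ z.re ≤ σ₁ := by
      intro z hz
      have h1 : |(z - D₀).re| ≤ ‖z - D₀‖ := Complex.abs_re_le_norm _
      have h2 : ‖z - D₀‖ ≤ 2 * r := by
        rw [← Complex.dist_eq]; exact Metric.mem_closedBall.mp hz
      have h3 : (z - D₀).re = z.re - σ := by simp [hσ_def]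
      rw [h3] at h1
      rw [hσ₀_def, hσ₁_def]
      constructor <;> [linarith [abs_le.mp (h1.trans h2) |>.1];
        linarith [abs_le.mp (h1.trans h2) |>.2]]
    have hball_S : Metric.closedBall D₀ (2 * r) ⊆ S := by
      intro z hz
      obtain ⟨hz1, hz2⟩ := hre_ball z hz
      exact ⟨lt_of_lt_of_le hσ₀pos hz1, lt_of_le_of_lt hz2 hσ₁lt⟩
    obtain ⟨M, hM⟩ := h_bd (Metric.closedBall D₀ (2 * r))
      (isCompact_closedBall _ _) hball_S
    set M' := max M 0 with hM'_def
    have hM'nn : 0 ≤ M' := le_max_right M 0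
    set bound : (Fin L → ℝ) → ℝ := fun x => M' * G σ₀ σ₁ x / r with hbound_def
    have hbound_int : Integrable bound (volume.restrict B) := by
      rw [hbound_def]
      exact ((dom σ₀ σ₁ hσ₀pos hσ₀₁ hσ₁lt).const_mul M').div_const r
    have hball_sub : Metric.ball D₀ r ⊆ S := fun z hz =>
      hball_S (Metric.ball_subset_closedBall (Metric.ball_subset_ball (by linarith) hz))
    -- sphere bound for D in the small ball
    have hsphere : ∀ D ∈ Metric.ball D₀ r, ∀ z ∈ Metric.sphere D r,
        z ∈ Metric.closedBall D₀ (2 * r) := by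
      intro D hD z hz
      rw [Metric.mem_closedBall]
      calc dist z D₀ ≤ dist z D + dist D D₀ := dist_triangle _ _ _
        _ ≤ r + r := add_le_add (le_of_eq (Metric.mem_sphere.mp hz))
            (le_of_lt (Metric.mem_ball.mp hD))
        _ = 2 * r := by ring
    have hcball_sub : ∀ D ∈ Metric.ball D₀ r,
        Metric.closedBall D r ⊆ Metric.closedBall D₀ (2 * r) := by
      intro D hD z hz
      rw [Metric.mem_closedBall]
      calc dist z D₀ ≤ dist z D + dist D D₀ := dist_triangle _ _ _
        _ ≤ r + r := add_le_add (Metric.mem_closedBall.mp hz)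
            (le_of_lt (Metric.mem_ball.mp hD))
        _ = 2 * r := by ring
    -- apply the dominated differentiation theorem
    have hF'meas : AEStronglyMeasurable
        (fun x => deriv (fun z => P z x * h z x) D₀) (volume.restrict B) := by
      set u : ℕ → ℂ := fun n => D₀ + (((n : ℝ) + 1)⁻¹ : ℝ) with hu_def
      have hu_ne : ∀ n, u n ≠ D₀ := by
        intro n
        rw [hu_def]
        simp only [ne_eq, add_eq_left, Complex.ofReal_eq_zero]
        positivity
      have hu_tendsto : Filter.Tendsto u Filter.atTop (nhdsWithin D₀ {D₀}ᶜ) := by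
        rw [tendsto_nhdsWithin_iff]
        constructor
        · rw [hu_def]
          have h0 : Filter.Tendsto (fun n : ℕ => (((n : ℝ) + 1)⁻¹ : ℝ)) Filter.atTop (nhds 0) := by
            simpa [one_div] using tendsto_one_div_add_atTop_nhds_zero_nat (𝕜 := ℝ)
          have := (Complex.continuous_ofReal.tendsto 0).comp h0
          simpa using (tendsto_const_nhds (x := D₀)).add this
        · exact Filter.Eventually.of_forall fun n => hu_ne n
      apply aestronglyMeasurable_of_tendsto_ae (u := Filter.atTop)
        (f := fun n x => (u n - D₀)⁻¹ • (P (u n) x * h (u n) x - P D₀ x * h D₀ x))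
      · intro n
        have h1 := (hAESM (u n)).sub (hAESM D₀)
        exact h1.const_smul ((u n - D₀)⁻¹)
      · filter_upwards [ae_restrict_of_ae hΦdiffOn, ae_restrict_mem hBmeas]
          with x hdiffx hxmem
        have hD₀S : D₀ ∈ S := ⟨hσ1, hσ2⟩
        have hder : HasDerivAt (fun z => P z x * h z x)
            (deriv (fun z => P z x * h z x) D₀) D₀ :=
          ((hdiffx hxmem).differentiableAt (hS_open.mem_nhds hD₀S)).hasDerivAt
        have hslope := hasDerivAt_iff_tendsto_slope.mp hder
        have := hslope.comp hu_tendsto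
        refine this.congr fun n => ?_
        simp only [Function.comp_apply, slope_def_module]
    have hF'bd : ∀ᵐ x ∂(volume.restrict B), ∀ D ∈ Metric.ball D₀ r,
        ‖deriv (fun z => P z x * h z x) D‖ ≤ bound x := by
      filter_upwards [ae_restrict_of_ae hΦdiffOn, ae_restrict_mem hBmeas]
        with x hdiffx hxmem D hD
      have hdc : DiffContOnCl ℂ (fun z => P z x * h z x) (Metric.ball D r) := by
        constructor
        · exact (hdiffx hxmem).mono fun z hz =>
            hball_S (hcball_sub D hD (Metric.ball_subset_closedBall hz))
        · rw [closure_ball D hr.ne']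
          exact ((hdiffx hxmem).continuousOn).mono fun z hz =>
            hball_S (hcball_sub D hD hz)
      have := norm_deriv_le_of_forall_mem_sphere_norm_le hr hdc
        (C := M' * G σ₀ σ₁ x) ?_
      · rw [hbound_def]
        calc ‖deriv (fun z => P z x * h z x) D‖ ≤ (M' * G σ₀ σ₁ x) / r := this
          _ = M' * G σ₀ σ₁ x / r := by ring
      · intro z hz
        have hzc := hsphere D hD z hz
        obtain ⟨hz1, hz2⟩ := hre_ball z hzc
        rw [norm_mul]
        calc ‖P z x‖ * ‖h z x‖ ≤ G σ₀ σ₁ x * M' :=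
              mul_le_mul (key σ₀ σ₁ hσ₀pos hσ₁lt z hz1 hz2 x hxmem)
                ((hM z hzc x hxmem).trans (le_max_left M 0))
                (norm_nonneg _) (hGnn _ _ x hxmem)
          _ = M' * G σ₀ σ₁ x := mul_comm _ _
    have hF'diff : ∀ᵐ x ∂(volume.restrict B), ∀ D ∈ Metric.ball D₀ r,
        HasDerivAt (fun z => P z x * h z x)
          (deriv (fun z => P z x * h z x) D) D := by
      filter_upwards [ae_restrict_of_ae hΦdiffOn, ae_restrict_mem hBmeas]
        with x hdiffx hxmem D hD
      exact ((hdiffx hxmem).differentiableAt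
        (hS_open.mem_nhds (hball_sub hD))).hasDerivAt
    obtain ⟨-, hF⟩ := hasDerivAt_integral_of_dominated_loc_of_deriv_le
      (μ := volume.restrict B) (x₀ := D₀)
      (F := fun D (x : Fin L → ℝ) => P D x * h D x)
      (F' := fun D (x : Fin L → ℝ) => deriv (fun z => P z x * h z x) D)
      (bound := bound) (Metric.ball_mem_nhds D₀ hr)
      (Filter.Eventually.of_forall fun D => hAESM D)
      (part1 D₀ ⟨hσ1, hσ2⟩) hF'meas hF'bd hbound_int hF'diff
    exact hF.differentiableAt
  constructor
  · exact fun D hD => part1 D hD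
  · have hdiffOn : DifferentiableOn ℂ (fun D : ℂ => ∫ x in B, P D x * h D x) S :=
      fun D hD => (main_diff D hD).differentiableWithinAt
    exact (hdiffOn.analyticOnNhd hS_open).analyticOn
end

section
/- Let N be a positive integer and D a positive even integer. Let A be a real symmetric N×N matrix, B a real antisymmetric N×N matrix (Bᵀ = −B), and let σ be a complex D×D matrix which is Hermitian (σ* = σ), satisfies σ² = I_D, and has trace zero. Then, viewing A and B as complex matrices, det( A ⊗ I_D − B ⊗ σ ) = ( det(A + B) )^D, where ⊗ denotes the Kronecker (tensor) product of matrices. -/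
open Matrix Kronecker

/-- For `A` real symmetric, `B` real antisymmetric (`N×N`) and `σ` a
Hermitian involutive traceless `D×D` complex matrix (`D` even and positive),
`det(A ⊗ I_D − B ⊗ σ) = (det(A + B))^D`. This is the identity `det Q = (det M)^D`
reducing the first polynomial of the parametric representation to `det M`, `M = A + B`. -/
theorem statement7 (N D : ℕ) (hN : 0 < N) (hD : 0 < D) (hDeven : Even D)
    (A B : Matrix (Fin N) (Fin N) ℝ) (hA : Aᵀ = A) (hB : Bᵀ = -B)
    (σ : Matrix (Fin D) (Fin D) ℂ)
    (hσherm : σᴴ = σ) (hσinv : σ * σ = 1) (hσtr : σ.trace = 0) :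
    ((A.map (fun a => (a : ℂ))) ⊗ₖ (1 : Matrix (Fin D) (Fin D) ℂ) -
        (B.map (fun a => (a : ℂ))) ⊗ₖ σ).det =
      ((A.map (fun a => (a : ℂ))) + (B.map (fun a => (a : ℂ)))).det ^ D := by
  set A' : Matrix (Fin N) (Fin N) ℂ := A.map (fun a => (a : ℂ)) with hA'
  set B' : Matrix (Fin N) (Fin N) ℂ := B.map (fun a => (a : ℂ)) with hB'
  have hA't : A'ᵀ = A' := by
    ext i j
    have := congrArg (fun M => M i j) hA
    simpa [hA'] using congrArg (fun r : ℝ => (r : ℂ)) this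
  have hB't : B'ᵀ = -B' := by
    ext i j
    have := congrArg (fun M => M i j) hB
    simpa [hB'] using congrArg (fun r : ℝ => (r : ℂ)) this
  have hσ : σ.IsHermitian := hσherm
  set U : Matrix (Fin D) (Fin D) ℂ := (hσ.eigenvectorUnitary : Matrix (Fin D) (Fin D) ℂ)
  set d : Fin D → ℂ := fun k => (hσ.eigenvalues k : ℂ) with hd
  have hspec : σ = U * Matrix.diagonal d * star U := hσ.spectral_theorem
  have hUU : U * star U = 1 := (Matrix.mem_unitaryGroup_iff).mp hσ.eigenvectorUnitary.2
  have hUU' : star U * U = 1 := (Matrix.mem_unitaryGroup_iff').mp hσ.eigenvectorUnitary.2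
  -- eigenvalues square to one
  have hdsq : ∀ k, d k * d k = 1 := by
    have h1 : Matrix.diagonal d * Matrix.diagonal d = 1 := by
      have : star U * (σ * σ) * U = 1 := by
        rw [hσinv, Matrix.mul_one, hUU']
      rw [hspec] at this
      calc Matrix.diagonal d * Matrix.diagonal d
          = (star U * U) * Matrix.diagonal d * ((star U * U) * Matrix.diagonal d) * (star U * U) := by
            rw [hUU']; simp [Matrix.mul_assoc]
        _ = star U * (U * Matrix.diagonal d * star U * (U * Matrix.diagonal d * star U)) * U := by
            simp only [Matrix.mul_assoc]
        _ = 1 := this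
    intro k
    have := congrArg (fun M => M k k) h1
    simpa [Matrix.diagonal_mul_diagonal, Matrix.diagonal_apply_eq, Matrix.one_apply_eq] using this
  -- conjugate away U
  have key : A' ⊗ₖ (1 : Matrix (Fin D) (Fin D) ℂ) - B' ⊗ₖ σ
      = ((1 : Matrix (Fin N) (Fin N) ℂ) ⊗ₖ U) *
        (A' ⊗ₖ (1 : Matrix (Fin D) (Fin D) ℂ) - B' ⊗ₖ Matrix.diagonal d) *
        ((1 : Matrix (Fin N) (Fin N) ℂ) ⊗ₖ star U) := by
    rw [Matrix.mul_sub, Matrix.sub_mul, ← Matrix.mul_kronecker_mul, ← Matrix.mul_kronecker_mul,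
      ← Matrix.mul_kronecker_mul, ← Matrix.mul_kronecker_mul]
    rw [Matrix.one_mul, Matrix.mul_one, Matrix.one_mul, Matrix.mul_one, hUU, hspec]
    simp [Matrix.mul_assoc]
  have hdetU : (((1 : Matrix (Fin N) (Fin N) ℂ) ⊗ₖ U).det) *
      (((1 : Matrix (Fin N) (Fin N) ℂ) ⊗ₖ star U).det) = 1 := by
    rw [← Matrix.det_mul, ← Matrix.mul_kronecker_mul, Matrix.one_mul, hUU]
    simp [Matrix.one_kronecker_one]
  -- block diagonal form
  have hbd : (A' ⊗ₖ (1 : Matrix (Fin D) (Fin D) ℂ) - B' ⊗ₖ Matrix.diagonal d)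
      = Matrix.blockDiagonal (fun k => A' - d k • B') := by
    ext ⟨i, k⟩ ⟨j, l⟩
    simp only [Matrix.sub_apply, Matrix.kroneckerMap_apply, Matrix.blockDiagonal_apply,
      Matrix.one_apply, Matrix.diagonal_apply, Matrix.smul_apply, smul_eq_mul]
    by_cases h : k = l <;> simp [h, mul_comm]
  -- each block has det = det (A' + B')
  have hblock : ∀ k, (A' - d k • B').det = (A' + B').det := by
    intro k
    rcases mul_self_eq_one_iff.mp (hdsq k) with h | h
    · rw [h, one_smul, ← Matrix.det_transpose (A' - B'), Matrix.transpose_sub, hA't, hB't,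
        sub_neg_eq_add]
    · rw [h, neg_smul, one_smul, sub_neg_eq_add]
  rw [key, Matrix.det_mul, Matrix.det_mul, mul_comm, ← mul_assoc, mul_comm
    (((1 : Matrix (Fin N) (Fin N) ℂ) ⊗ₖ star U).det), hdetU, one_mul, hbd,
    Matrix.det_blockDiagonal]
  simp only [hblock]
  rw [Finset.prod_const, Finset.card_univ, Fintype.card_fin]
end

section
/- Let L and m be nonnegative integers with L ≥ 1, and let B be a complex antisymmetric (2L + m) × (2L + m) matrix. For t = (t₁,…,t_L) ∈ (0,∞)^L let A(t) be the diagonal (2L + m) × (2L + m) matrix with diagonal entries (1/t₁, …, 1/t_L, t₁, …, t_L, 0, …, 0). Then there exists a polynomial P ∈ ℂ[T₁,…,T_L] such that for all t ∈ (0,∞)^L, (∏_{ℓ=1}^L t_ℓ) · det( A(t) + B ) = P(t₁,…,t_L). -/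
open Matrix

/-- The diagonal `(2L+m)×(2L+m)` matrix with diagonal entries
`(1/t₁, …, 1/t_L, t₁, …, t_L, 0, …, 0)`. -/
noncomputable def diagMatA (L m : ℕ) (t : Fin L → ℝ) :
    Matrix (Fin (2 * L + m)) (Fin (2 * L + m)) ℂ :=
  Matrix.diagonal fun i =>
    if h : (i : ℕ) < L then ((t ⟨(i : ℕ), h⟩ : ℝ) : ℂ)⁻¹
    else if h2 : (i : ℕ) < 2 * L then ((t ⟨(i : ℕ) - L, by omega⟩ : ℝ) : ℂ)
    else 0

/-- For any complex antisymmetric `(2L+m)×(2L+m)` matrix `B` and `A(t)`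
the diagonal matrix with entries `(1/t₁,…,1/t_L, t₁,…,t_L, 0,…,0)`, the function
`(∏ t_ℓ)·det(A(t) + B)` is a polynomial in `t₁,…,t_L`: this is the first polynomial
`HU_G` of the parametric representation. -/
theorem statement8 (L m : ℕ) (hL : 1 ≤ L)
    (B : Matrix (Fin (2 * L + m)) (Fin (2 * L + m)) ℂ) (hB : Bᵀ = -B) :
    ∃ P : MvPolynomial (Fin L) ℂ, ∀ t : Fin L → ℝ, (∀ ℓ, 0 < t ℓ) →
      (∏ ℓ : Fin L, ((t ℓ : ℝ) : ℂ)) * (diagMatA L m t + B).det =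
        MvPolynomial.eval (fun ℓ => ((t ℓ : ℝ) : ℂ)) P := by
  classical
  -- polynomial matrix: rows with index < L of A+B multiplied by t_i
  let N : Matrix (Fin (2*L+m)) (Fin (2*L+m)) (MvPolynomial (Fin L) ℂ) := fun i j =>
    if h : (i:ℕ) < L then
      (if i = j then 1 else 0) + MvPolynomial.X ⟨(i:ℕ), h⟩ * MvPolynomial.C (B i j)
    else if h2 : (i:ℕ) < 2*L then
      (if i = j then MvPolynomial.X ⟨(i:ℕ) - L, by omega⟩ else 0) + MvPolynomial.C (B i j)
    else MvPolynomial.C (B i j)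
  refine ⟨N.det, ?_⟩
  intro t ht
  set f : MvPolynomial (Fin L) ℂ →+* ℂ := MvPolynomial.eval (fun ℓ => ((t ℓ : ℝ) : ℂ)) with hf
  have htne : ∀ ℓ : Fin L, ((t ℓ : ℝ) : ℂ) ≠ 0 := fun ℓ =>
    Complex.ofReal_ne_zero.mpr (ne_of_gt (ht ℓ))
  let d : Fin (2*L+m) → ℂ := fun i => if h : (i:ℕ) < L then ((t ⟨(i:ℕ), h⟩ : ℝ) : ℂ) else 1
  have hmap : N.map f = Matrix.diagonal d * (diagMatA L m t + B) := by
    ext i j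
    rw [Matrix.map_apply]
    simp only [Matrix.map_apply, Matrix.diagonal_mul, diagMatA, Matrix.add_apply,
      Matrix.diagonal_apply, N, d, hf]
    by_cases h : (i:ℕ) < L
    · simp only [dif_pos h, map_add, _root_.map_mul, _root_.map_one,
        MvPolynomial.eval_X, MvPolynomial.eval_C]
      by_cases hij : i = j
      · subst hij
        simp only [if_pos rfl, if_true, eq_self_iff_true, _root_.map_one, mul_add]
        rw [mul_inv_cancel₀ (htne _)]
      · simp [hij, mul_add]
    · simp only [dif_neg h]
      by_cases h2 : (i:ℕ) < 2*L
      · simp only [dif_pos h2, map_add, MvPolynomial.eval_X, MvPolynomial.eval_C]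
        by_cases hij : i = j
        · subst hij; simp [if_pos rfl, mul_add]
        · simp [hij]
      · simp only [dif_neg h2, MvPolynomial.eval_C]
        by_cases hij : i = j
        · subst hij; simp
        · simp [hij]
  have hprod : ∏ i, d i = ∏ ℓ : Fin L, ((t ℓ : ℝ) : ℂ) := by
    let e : Fin L → Fin (2*L+m) := fun ℓ => ⟨(ℓ:ℕ), by omega⟩
    have hinj : Function.Injective e := by
      intro a b hab
      simpa [e, Fin.ext_iff] using hab
    have h1 : ∏ i ∈ Finset.univ.image e, d i = ∏ i, d i := by
      refine Finset.prod_subset (Finset.subset_univ _) ?_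
      intro x _ hx
      have hxL : ¬ (x:ℕ) < L := by
        intro hlt
        exact hx (Finset.mem_image.mpr ⟨⟨(x:ℕ), hlt⟩, Finset.mem_univ _, Fin.ext rfl⟩)
      simp [d, hxL]
    rw [← h1, Finset.prod_image (fun a _ b _ h => hinj h)]
    refine Finset.prod_congr rfl fun ℓ _ => ?_
    simp [d, e, ℓ.isLt]
  calc (∏ ℓ : Fin L, ((t ℓ : ℝ) : ℂ)) * (diagMatA L m t + B).det
      = (∏ i, d i) * (diagMatA L m t + B).det := by rw [hprod]
    _ = (Matrix.diagonal d).det * (diagMatA L m t + B).det := by rw [Matrix.det_diagonal]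
    _ = (Matrix.diagonal d * (diagMatA L m t + B)).det := (Matrix.det_mul _ _).symm
    _ = (N.map f).det := by rw [hmap]
    _ = f N.det := (RingHom.map_det f N).symm
end

section
/- Let n be a positive integer, let A be a real symmetric positive semidefinite n×n matrix, and let B be a real antisymmetric n×n matrix (Bᵀ = −B). Then det(A + B) ≥ det(A) ≥ 0. -/
open Matrix
open scoped MatrixOrder

/-- For a real PSD matrix `M`, `1 ≤ det (1 + M)`. -/
lemma aux_det_one_add_psd {n : ℕ} {M : Matrix (Fin n) (Fin n) ℝ}
    (hM : M.PosSemidef) : 1 ≤ (1 + M).det := by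
  set U : Matrix (Fin n) (Fin n) ℝ := (hM.1.eigenvectorUnitary : Matrix (Fin n) (Fin n) ℝ)
  have hU : U * star U = 1 := Matrix.mem_unitaryGroup_iff.mp hM.1.eigenvectorUnitary.2
  set D : Matrix (Fin n) (Fin n) ℝ :=
    diagonal (RCLike.ofReal ∘ hM.1.eigenvalues) with hD
  have h1 : (1 : Matrix (Fin n) (Fin n) ℝ) + M = U * (1 + D) * star U := by
    rw [mul_add, mul_one, add_mul, hU]
    congr 1
    exact hM.1.spectral_theorem
  have h2 : (1 + M).det = (1 + D).det := by
    rw [h1, det_mul_right_comm, hU, one_mul]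
  rw [h2, hD, ← diagonal_one, diagonal_add, det_diagonal]
  have key : ∀ i : Fin n, (1:ℝ) ≤ (1 : Fin n → ℝ) i + (RCLike.ofReal ∘ hM.1.eigenvalues) i := by
    intro i
    have := hM.eigenvalues_nonneg i
    simp only [Pi.one_apply, Function.comp_apply, RCLike.ofReal_real_eq_id, id_eq]
    linarith
  calc (1:ℝ) = ∏ _i : Fin n, 1 := by simp
    _ ≤ ∏ i : Fin n, ((1 : Fin n → ℝ) i + (RCLike.ofReal ∘ hM.1.eigenvalues) i) :=
        Finset.prod_le_prod (fun i _ => zero_le_one) (fun i _ => key i)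

/-- For a real antisymmetric matrix `S`, `(1 + S) * (1 + S)ᵀ = 1 + S * Sᵀ`. -/
lemma aux_skew_key {n : ℕ} {S : Matrix (Fin n) (Fin n) ℝ} (hS : Sᵀ = -S) :
    (1 + S) * (1 + S)ᵀ = 1 + S * Sᵀ := by
  rw [transpose_add, transpose_one, hS]
  noncomm_ring

/-- For a real antisymmetric matrix `S`, `det (1 + S) ^ 2 ≥ 1`. -/
lemma aux_det_sq {n : ℕ} {S : Matrix (Fin n) (Fin n) ℝ} (hS : Sᵀ = -S) :
    1 ≤ (1 + S).det ^ 2 := by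
  have hpsd : (S * Sᵀ).PosSemidef := by
    have := Matrix.posSemidef_self_mul_conjTranspose S
    rwa [conjTranspose_eq_transpose_of_trivial] at this
  have h1 : ((1 + S) * (1 + S)ᵀ).det = (1 + S).det ^ 2 := by
    rw [det_mul, det_transpose, sq]
  have h2 := aux_det_one_add_psd hpsd
  rw [← h1, aux_skew_key hS]
  exact h2

/-- For a real antisymmetric matrix `S`, `1 ≤ det (1 + S)`. -/
lemma aux_det_one_add_skew {n : ℕ} {S : Matrix (Fin n) (Fin n) ℝ} (hS : Sᵀ = -S) :
    1 ≤ (1 + S).det := by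
  -- the function t ↦ det (1 + t • S) is continuous, equals 1 at 0, and never vanishes
  set f : ℝ → ℝ := fun t => (1 + t • S).det with hf
  have hcont : Continuous f :=
    Continuous.matrix_det (continuous_const.add (continuous_id.smul continuous_const))
  have hne : ∀ t, f t ≠ 0 := by
    intro t
    have hskew : (t • S)ᵀ = -(t • S) := by rw [transpose_smul, hS, smul_neg]
    have := aux_det_sq hskew
    intro h0
    rw [hf] at h0
    simp only [h0] at this
    norm_num at this
  have hf0 : f 0 = 1 := by simp [hf]
  have hpos : 0 < f 1 := by
    by_contra hle
    push_neg at hle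
    have hiv := intermediate_value_Icc' (by norm_num : (0:ℝ) ≤ 1) hcont.continuousOn
    have h0mem : (0 : ℝ) ∈ Set.Icc (f 1) (f 0) := ⟨hle, by rw [hf0]; norm_num⟩
    obtain ⟨c, _, hc⟩ := hiv h0mem
    exact hne c hc
  have hsq : 1 ≤ f 1 ^ 2 := by
    have hskew : ((1:ℝ) • S)ᵀ = -((1:ℝ) • S) := by rw [transpose_smul, hS, smul_neg]
    exact aux_det_sq hskew
  have : (1 : Matrix (Fin n) (Fin n) ℝ) + S = 1 + (1:ℝ) • S := by rw [one_smul]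
  rw [this]
  change 1 ≤ f 1
  nlinarith

/-- Positive definite case of the main inequality. -/
lemma aux_pd_case {n : ℕ} {A B : Matrix (Fin n) (Fin n) ℝ}
    (hA : A.PosDef) (hB : Bᵀ = -B) : A.det ≤ (A + B).det := by
  have hAps := hA.posSemidef
  set Q : Matrix (Fin n) (Fin n) ℝ := CFC.sqrt A with hQdef
  have hQQ : Q * Q = A := CFC.sqrt_mul_sqrt_self A hAps.nonneg
  have hQsymm : Qᵀ = Q := by
    have := (CFC.sqrt_nonneg A).posSemidef.1
    rwa [IsHermitian, conjTranspose_eq_transpose_of_trivial] at this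
  have hdetA : 0 < A.det := hA.det_pos
  have hdetQ : IsUnit Q.det := by
    have h : Q.det * Q.det = A.det := by rw [← det_mul, hQQ]
    have : Q.det ≠ 0 := by intro h0; rw [h0, mul_zero] at h; exact hdetA.ne h
    exact this.isUnit
  set S : Matrix (Fin n) (Fin n) ℝ := Q⁻¹ * B * Q⁻¹ with hSdef
  have hQinvT : (Q⁻¹)ᵀ = Q⁻¹ := by rw [transpose_nonsing_inv, hQsymm]
  have hSskew : Sᵀ = -S := by
    rw [hSdef, transpose_mul, transpose_mul, hQinvT, hB]
    simp only [mul_neg, neg_mul]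
    rw [mul_assoc]
  have hfact : A + B = Q * (1 + S) * Q := by
    rw [mul_add, mul_one, add_mul, hQQ, hSdef]
    congr 1
    rw [← mul_assoc, Matrix.mul_nonsing_inv_cancel_left _ _ hdetQ, mul_assoc,
      Matrix.nonsing_inv_mul _ hdetQ, mul_one]
  have hdet : (A + B).det = A.det * (1 + S).det := by
    rw [hfact, det_mul, det_mul, ← hQQ, det_mul]
    ring
  rw [hdet]
  exact le_mul_of_one_le_right hdetA.le (aux_det_one_add_skew hSskew)

lemma aux_smul_one_posdef {n : ℕ} {ε : ℝ} (hε : 0 < ε) :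
    (ε • (1 : Matrix (Fin n) (Fin n) ℝ)).PosDef := by
  rw [posDef_iff_dotProduct_mulVec]
  constructor
  · rw [IsHermitian, conjTranspose_smul, conjTranspose_one]
    simp
  · intro x hx
    rw [smul_mulVec, one_mulVec, dotProduct_smul]
    have : 0 < star x ⬝ᵥ x := by
      rwa [dotProduct_star_self_pos_iff]
    exact mul_pos hε this

/-- For a real symmetric positive semidefinite matrix `A` and a real
antisymmetric matrix `B`, `det(A + B) ≥ det A ≥ 0`: this underlies the positivity of
the first polynomial `HU_G = det(A + B)·∏ t_ℓ` of the parametric representation. -/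
theorem statement9 (n : ℕ) (hn : 0 < n)
    (A B : Matrix (Fin n) (Fin n) ℝ)
    (hA : A.PosSemidef) (hB : Bᵀ = -B) :
    A.det ≤ (A + B).det ∧ 0 ≤ A.det := by
  constructor
  · -- perturb A to A + ε • 1, which is positive definite, and take ε → 0⁺
    set f : ℝ → ℝ := fun ε => (A + ε • (1 : Matrix (Fin n) (Fin n) ℝ)).det with hfdef
    set g : ℝ → ℝ := fun ε => (A + ε • (1 : Matrix (Fin n) (Fin n) ℝ) + B).det with hgdef
    have hcontf : Continuous f :=
      Continuous.matrix_det (continuous_const.add (continuous_id.smul continuous_const))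
    have hcontg : Continuous g :=
      Continuous.matrix_det ((continuous_const.add
        (continuous_id.smul continuous_const)).add continuous_const)
    have hle : ∀ ε ∈ Set.Ioi (0:ℝ), f ε ≤ g ε := by
      intro ε hε
      exact aux_pd_case (Matrix.PosDef.posSemidef_add hA (aux_smul_one_posdef hε)) hB
    have hf0 : f 0 = A.det := by simp [hfdef]
    have hg0 : g 0 = (A + B).det := by simp [hgdef]
    have htf : Filter.Tendsto f (nhdsWithin 0 (Set.Ioi 0)) (nhds A.det) := by
      rw [← hf0]
      exact (hcontf.tendsto 0).mono_left nhdsWithin_le_nhds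
    have htg : Filter.Tendsto g (nhdsWithin 0 (Set.Ioi 0)) (nhds (A + B).det) := by
      rw [← hg0]
      exact (hcontg.tendsto 0).mono_left nhdsWithin_le_nhds
    exact le_of_tendsto_of_tendsto htf htg
      (Filter.eventually_inf_principal.mpr (Filter.Eventually.of_forall hle))
  · rw [hA.1.det_eq_prod_eigenvalues]
    refine Finset.prod_nonneg fun i _ => ?_
    simpa using hA.eigenvalues_nonneg i
end
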